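/- Block subcode lemma: Let F_q be a finite field with q elements, let G ∈ F_q[z]^{k×n} (1 ≤ k < n) be right invertible and minimal with row degrees ν_1,…,ν_k, complexity δ = ν_1 + … + ν_k, memory m = max{ν_1,…,ν_k}, and free distance d = min{ wt(uG) : u ∈ F_q[z]^k, u ≠ 0 }. For an integer i with i ≥ 1 if km = δ, respectively i ≥ 0 if km > δ, let U_i = { (u_1,…,u_k) ∈ F_q[z]^k : deg u_l ≤ m+i-1-ν_l for l = 1,…,k } and C_i = { uG : u ∈ U_i }. Then C_i is an F_q-subspace of F_q[z]^n of dimension k(m+i) - δ over F_q, every entry of every vector in C_i has degree at most m+i-1, and every nonzero element of C_i has weight at least d. -/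
import Mathlib


open Polynomial Matrix

/-- The weight of a vector of polynomials: the total number of nonzero coefficients
occurring in its polynomial entries. -/
def polyWt {F : Type*} [Field F] {n : ℕ} (v : Fin n → Polynomial F) : ℕ :=
  ∑ j, (v j).support.card

/-- The complexity of a polynomial generator matrix `G ∈ F[z]^{k×n}`:
the maximal degree of its `k×k` minors. -/
noncomputable def complexity {F : Type*} [Field F] {k n : ℕ}
    (G : Matrix (Fin k) (Fin n) (Polynomial F)) : ℕ :=
  Finset.univ.sup fun f : Fin k ↪ Fin n => ((G.submatrix id ⇑f).det).natDegree

/-- The `r`-th row degree of a polynomial matrix: the maximal degree of the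
polynomial entries in row `r`. -/
noncomputable def rowDeg {F : Type*} [Field F] {k n : ℕ}
    (G : Matrix (Fin k) (Fin n) (Polynomial F)) (r : Fin k) : ℕ :=
  Finset.univ.sup fun j => (G r j).natDegree

/-- **Block subcode lemma.**
Let `F_q` be a finite field, `G ∈ F_q[z]^{k×n}` (`1 ≤ k < n`) right invertible and
minimal with row degrees `ν`, complexity `δ = ∑ ν r`, memory `m = max ν`, and free
distance `d`.  For an admissible `i` (with `i ≥ 1` if `km = δ`, resp. `i ≥ 0` if
`km > δ`), let `U_i = { u ∈ F_q[z]^k : deg u_l ≤ m+i-1-ν_l }` (the degree condition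
being encoded coefficientwise: `(u l).coeff t = 0` whenever `m + i ≤ t + ν l`)
and `C_i = { uG : u ∈ U_i }`.  Then `C_i` is an `F_q`-subspace of `F_q[z]^n` of
dimension `k(m+i) - δ` over `F_q`, every entry of every vector in `C_i` has degree
at most `m+i-1`, and every nonzero element of `C_i` has weight at least `d`. -/
theorem block_subcode_lemma
    {F : Type*} [Field F] [Fintype F] {k n : ℕ}
    (hk : 1 ≤ k) (hkn : k < n)
    (G : Matrix (Fin k) (Fin n) (Polynomial F))
    (hright : ∃ H : Matrix (Fin n) (Fin k) (Polynomial F), G * H = 1)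
    (ν : Fin k → ℕ) (hν : ∀ r, ν r = rowDeg G r)
    (δ m : ℕ) (hδ : δ = ∑ r, ν r)
    (hminimal : complexity G = δ)
    (hm : m = Finset.univ.sup ν)
    (d : ℕ)
    (hd : IsLeast {w : ℕ | ∃ u : Fin k → Polynomial F,
      u ≠ 0 ∧ w = polyWt (Matrix.vecMul u G)} d)
    (i : ℕ) (hi : k * m = δ → 1 ≤ i) :
    (∃ W : Submodule F (Fin n → Polynomial F),
      (W : Set (Fin n → Polynomial F)) =
        {v | ∃ u : Fin k → Polynomial F,
          (∀ l t, m + i ≤ t + ν l → (u l).coeff t = 0) ∧ v = Matrix.vecMul u G} ∧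
      Module.finrank F W = k * (m + i) - δ) ∧
    (∀ u : Fin k → Polynomial F, (∀ l t, m + i ≤ t + ν l → (u l).coeff t = 0) →
      ∀ j, (Matrix.vecMul u G j).degree < ((m + i : ℕ) : WithBot ℕ)) ∧
    (∀ u : Fin k → Polynomial F, (∀ l t, m + i ≤ t + ν l → (u l).coeff t = 0) →
      Matrix.vecMul u G ≠ 0 → d ≤ polyWt (Matrix.vecMul u G)) := by
  classical
  obtain ⟨H, hH⟩ := hright
  set c : Fin k → ℕ := fun l => m + i - ν l with hc
  have hνm : ∀ l, ν l ≤ m := fun l => hm ▸ Finset.le_sup (Finset.mem_univ l)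
  have hνmi : ∀ l, ν l ≤ m + i := fun l => (hνm l).trans (Nat.le_add_right _ _)
  -- the degree condition is membership in degreeLT pieces
  have hcond : ∀ u : Fin k → Polynomial F,
      (∀ l t, m + i ≤ t + ν l → (u l).coeff t = 0) ↔
      ∀ l, u l ∈ degreeLT F (c l) := by
    intro u
    constructor
    · intro h l
      rw [Polynomial.mem_degreeLT, Polynomial.degree_lt_iff_coeff_zero]
      intro t ht
      have hc1 : c l = m + i - ν l := rfl
      have hc2 := hνmi l
      exact h l t (by omega)
    · intro h l t ht
      have := (Polynomial.mem_degreeLT.mp (h l))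
      rw [Polynomial.degree_lt_iff_coeff_zero] at this
      have hc1 : c l = m + i - ν l := rfl
      have hc2 := hνmi l
      exact this t (by omega)
  -- linear map u ↦ u ᵥ* G
  let φ : (Fin k → Polynomial F) →ₗ[F] (Fin n → Polynomial F) :=
    { toFun := fun u => Matrix.vecMul u G
      map_add' := fun u v => Matrix.add_vecMul G u v
      map_smul' := fun a u => by
        funext j
        simp [Matrix.vecMul, dotProduct, Finset.smul_sum, smul_mul_assoc] }
  have hφinj : Function.Injective φ := by
    intro u v huv
    have : Matrix.vecMul u (G * H) = Matrix.vecMul v (G * H) := by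
      rw [← Matrix.vecMul_vecMul, ← Matrix.vecMul_vecMul]
      exact congrArg (fun w => Matrix.vecMul w H) huv
    simpa [hH, Matrix.vecMul_one] using this
  let ι : (∀ l, degreeLT F (c l)) →ₗ[F] (Fin k → Polynomial F) :=
    LinearMap.pi fun l => (degreeLT F (c l)).subtype ∘ₗ LinearMap.proj l
  have hιval : ∀ p, ι p = fun l => ((p l : Polynomial F)) := fun p => rfl
  have hιinj : Function.Injective ι := by
    intro p q hpq
    funext l
    exact Subtype.ext (congrFun hpq l)
  refine ⟨⟨LinearMap.range (φ ∘ₗ ι), ?_, ?_⟩, ?_, ?_⟩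
  · ext v
    simp only [SetLike.mem_coe, LinearMap.mem_range, Set.mem_setOf_eq]
    constructor
    · rintro ⟨p, rfl⟩
      exact ⟨ι p, (hcond (ι p)).mpr (fun l => (p l).2), rfl⟩
    · rintro ⟨u, hu, rfl⟩
      exact ⟨fun l => ⟨u l, (hcond u).mp hu l⟩, rfl⟩
  · haveI : ∀ l, Module.Finite F (degreeLT F (c l)) :=
      fun l => Module.Finite.equiv (Polynomial.degreeLTEquiv F (c l)).symm
    haveI : ∀ l, Module.Free F (degreeLT F (c l)) := fun l => Module.Free.of_divisionRing F _
    rw [LinearMap.finrank_range_of_inj (f := φ ∘ₗ ι)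
      (by rw [LinearMap.coe_comp]; exact hφinj.comp hιinj)]
    rw [Module.finrank_pi_fintype]
    have h1 : ∀ l, Module.finrank F (degreeLT F (c l)) = c l := by
      intro l
      rw [(Polynomial.degreeLTEquiv F (c l)).finrank_eq, Module.finrank_fin_fun]
    simp_rw [h1]
    have h2 : (∑ l, c l) + δ = k * (m + i) := by
      rw [hδ, ← Finset.sum_add_distrib]
      have : ∀ l ∈ Finset.univ, c l + ν l = m + i := fun l _ => by
        have := hνmi l
        simp only [hc]; omega
      rw [Finset.sum_congr rfl this, Finset.sum_const, Finset.card_univ,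
        Fintype.card_fin, smul_eq_mul]
    omega
  · -- degree bound
    intro u hu j
    have hu' := (hcond u).mp hu
    unfold Matrix.vecMul dotProduct
    refine lt_of_le_of_lt (Polynomial.degree_sum_le _ _) ?_
    rw [Finset.sup_lt_iff (WithBot.bot_lt_coe _)]
    intro l _
    by_cases h0 : u l * G l j = 0
    · rw [h0, Polynomial.degree_zero]; exact WithBot.bot_lt_coe _
    · have hul : u l ≠ 0 := fun h => h0 (by rw [h, zero_mul])
      have hGlj : G l j ≠ 0 := fun h => h0 (by rw [h, mul_zero])
      have hdu : (u l).natDegree < c l := by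
        rw [Polynomial.natDegree_lt_iff_degree_lt hul]
        exact Polynomial.mem_degreeLT.mp (hu' l)
      have hdG : (G l j).natDegree ≤ ν l := by
        rw [hν l]
        exact Finset.le_sup (f := fun j => (G l j).natDegree) (Finset.mem_univ j)
      rw [Polynomial.degree_mul, Polynomial.degree_eq_natDegree hul,
        Polynomial.degree_eq_natDegree hGlj, ← Nat.cast_add, Nat.cast_lt]
      have h1 : ν l ≤ m + i := hνmi l
      have hc1 : c l = m + i - ν l := rfl
      omega
  · intro u hu hne
    refine hd.2 ⟨u, ?_, rfl⟩
    rintro rfl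
    exact hne (Matrix.zero_vecMul G)
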